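/- arXiv:1107.3094 — 2 statements merged into one kernel-verified Lean document; each statement's English description precedes it below -/
import Mathlib

section
/- Let g ≥ 1, let V = (ℤ/2ℤ)^{2g} with the standard symplectic pairing ⟨u, v⟩ = uᵀ J v, and fix a nonzero vector η ∈ V. If μ₁, μ₂ ∈ V are both nonzero, both different from η, and satisfy ⟨μ₁, η⟩ = ⟨μ₂, η⟩, then there exists a matrix S in the symplectic group Sp(2g, ℤ/2ℤ) with Sη = η and Sμ₁ = μ₂. Consequently the stabilizer G_η = {γ ∈ Sp(2g, ℤ/2ℤ) : γη = η} acts on the set of nonzero vectors of V with exactly three orbits: {η}, {μ ∉ {0, η} : ⟨μ, η⟩ = 0}, and {μ : ⟨μ, η⟩ = 1}. -/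
open Matrix

/-- The standard symplectic form `J = [[0, I], [-I, 0]]` on `(ℤ/2ℤ)^{2g}`. -/
def sympJ (g : ℕ) : Matrix (Fin g ⊕ Fin g) (Fin g ⊕ Fin g) (ZMod 2) :=
  Matrix.fromBlocks 0 1 (-1) 0

/-- The standard symplectic pairing `⟨u, v⟩ = uᵀ J v` on `(ℤ/2ℤ)^{2g}`. -/
def sympPair {g : ℕ} (u v : Fin g ⊕ Fin g → ZMod 2) : ZMod 2 :=
  dotProduct u ((sympJ g).mulVec v)

lemma neg_one_mat (g : ℕ) : (-1 : Matrix (Fin g) (Fin g) (ZMod 2)) = 1 := by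
  ext i j; simp only [Matrix.neg_apply]; exact CharTwo.neg_eq _

lemma sympJ_transpose (g : ℕ) : (sympJ g)ᵀ = sympJ g := by
  simp [sympJ, Matrix.fromBlocks_transpose, neg_one_mat]

lemma sympJ_mul_sympJ (g : ℕ) : sympJ g * sympJ g = 1 := by
  simp [sympJ, Matrix.fromBlocks_multiply, neg_one_mat]

lemma sympPair_self {g : ℕ} (v : Fin g ⊕ Fin g → ZMod 2) : sympPair v v = 0 := by
  simp [sympPair, sympJ, mulVec, dotProduct, Fintype.sum_sum_type, Matrix.fromBlocks,
    Matrix.one_apply, neg_one_mat]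
  have : ∑ x, v (Sum.inr x) * v (Sum.inl x) = ∑ x, v (Sum.inl x) * v (Sum.inr x) :=
    Finset.sum_congr rfl (fun x _ => mul_comm _ _)
  rw [this, CharTwo.add_self_eq_zero]

lemma sympPair_comm {g : ℕ} (u v : Fin g ⊕ Fin g → ZMod 2) :
    sympPair u v = sympPair v u := by
  rw [sympPair, sympPair, Matrix.dotProduct_mulVec, ← Matrix.mulVec_transpose,
    sympJ_transpose, dotProduct_comm]

lemma sympPair_add_left {g : ℕ} (u v w : Fin g ⊕ Fin g → ZMod 2) :
    sympPair (u + v) w = sympPair u w + sympPair v w := by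
  simp [sympPair, add_dotProduct]

lemma sympPair_add_right {g : ℕ} (u v w : Fin g ⊕ Fin g → ZMod 2) :
    sympPair u (v + w) = sympPair u v + sympPair u w := by
  simp [sympPair, Matrix.mulVec_add, dotProduct_add]

lemma zmod2_cases (x : ZMod 2) : x = 0 ∨ x = 1 := by revert x; decide

lemma exists_pair_one {g : ℕ} {v : Fin g ⊕ Fin g → ZMod 2} (hv : v ≠ 0) :
    ∃ p, sympPair p v = 1 := by
  by_contra h
  push_neg at h
  apply hv
  have hJ : (sympJ g).mulVec v = 0 := by
    funext i
    have h2 := h (Pi.single i 1)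
    rcases zmod2_cases (sympPair (Pi.single i 1) v) with h0 | h1
    · simpa [sympPair, single_dotProduct] using h0
    · exact absurd h1 h2
  have h3 : (sympJ g).mulVec ((sympJ g).mulVec v) = 0 := by rw [hJ, Matrix.mulVec_zero]
  rwa [Matrix.mulVec_mulVec, sympJ_mul_sympJ, Matrix.one_mulVec] at h3

section VMV
variable {g : ℕ}

lemma vecMulVec_transpose (a b : Fin g ⊕ Fin g → ZMod 2) :
    (vecMulVec a b)ᵀ = vecMulVec b a := by
  ext i j; simp [vecMulVec_apply, mul_comm]

lemma mul_vecMulVec (M : Matrix (Fin g ⊕ Fin g) (Fin g ⊕ Fin g) (ZMod 2))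
    (a b : Fin g ⊕ Fin g → ZMod 2) :
    M * vecMulVec a b = vecMulVec (M.mulVec a) b := by
  ext i j
  simp [Matrix.mul_apply, vecMulVec_apply, Matrix.mulVec, dotProduct,
    Finset.sum_mul, Finset.mul_sum, add_mul, mul_add, mul_assoc, mul_comm, mul_left_comm]

lemma vecMulVec_mul (M : Matrix (Fin g ⊕ Fin g) (Fin g ⊕ Fin g) (ZMod 2))
    (a b : Fin g ⊕ Fin g → ZMod 2) :
    vecMulVec a b * M = vecMulVec a (Matrix.mulVec Mᵀ b) := by
  ext i j
  simp [Matrix.mul_apply, vecMulVec_apply, Matrix.mulVec, dotProduct,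
    Finset.sum_mul, Finset.mul_sum, add_mul, mul_add, mul_assoc, mul_comm, mul_left_comm]

lemma vecMulVec_mulVec (a b x : Fin g ⊕ Fin g → ZMod 2) :
    (vecMulVec a b).mulVec x = (dotProduct b x) • a := by
  funext i
  simp [Matrix.mulVec, vecMulVec_apply, dotProduct, Finset.sum_mul, Finset.mul_sum,
    add_mul, mul_add, mul_assoc, mul_comm, mul_left_comm]

lemma vecMulVec_mul_vecMulVec (a b c d : Fin g ⊕ Fin g → ZMod 2) :
    vecMulVec a b * vecMulVec c d = (dotProduct b c) • vecMulVec a d := by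
  ext i j
  simp [Matrix.mul_apply, vecMulVec_apply, dotProduct, Finset.mul_sum,
    Finset.sum_mul, add_mul, mul_add, mul_assoc, mul_comm, mul_left_comm]

end VMV

/-- Symplectic transvection matrix associated to `w`. -/
def tv {g : ℕ} (w : Fin g ⊕ Fin g → ZMod 2) :
    Matrix (Fin g ⊕ Fin g) (Fin g ⊕ Fin g) (ZMod 2) :=
  1 + vecMulVec w ((sympJ g).mulVec w)

lemma tv_mulVec {g : ℕ} (w x : Fin g ⊕ Fin g → ZMod 2) :
    (tv w).mulVec x = x + (sympPair x w) • w := by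
  rw [tv, Matrix.add_mulVec, Matrix.one_mulVec, vecMulVec_mulVec]
  congr 2
  rw [sympPair, dotProduct_comm, Matrix.dotProduct_mulVec, ← Matrix.mulVec_transpose,
    sympJ_transpose]

lemma tv_symplectic {g : ℕ} (w : Fin g ⊕ Fin g → ZMod 2) :
    (tv w)ᵀ * sympJ g * tv w = sympJ g := by
  set u := (sympJ g).mulVec w with hu
  have hJt := sympJ_transpose g
  have hBJ : vecMulVec u w * sympJ g = vecMulVec u u := by
    rw [vecMulVec_mul, hJt, hu]
  have hJA : sympJ g * vecMulVec w u = vecMulVec u u := by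
    rw [mul_vecMulVec, hu]
  have huw : dotProduct u w = 0 := by
    rw [dotProduct_comm]; exact sympPair_self w
  have hBJA : vecMulVec u u * vecMulVec w u = 0 := by
    rw [vecMulVec_mul_vecMulVec, huw, zero_smul]
  have hT : (tv w)ᵀ = 1 + vecMulVec u w := by
    rw [tv, Matrix.transpose_add, Matrix.transpose_one, vecMulVec_transpose]
  rw [hT, tv]
  have expand : (1 + vecMulVec u w) * sympJ g * (1 + vecMulVec w u)
      = sympJ g + sympJ g * vecMulVec w u + vecMulVec u w * sympJ g
        + vecMulVec u w * sympJ g * vecMulVec w u := by noncomm_ring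
  have hself : vecMulVec u u + vecMulVec u u = 0 := by
    ext i j; simp [Matrix.add_apply, CharTwo.add_self_eq_zero]
  rw [expand, hBJ, hJA, hBJA, add_zero, add_assoc, hself, add_zero]

section Hits
variable {g : ℕ}
local notation "V" => Fin g ⊕ Fin g → ZMod 2

lemma vadd_self (v : V) : v + v = 0 := by
  funext i; exact CharTwo.add_self_eq_zero _

lemma vadd_eq_zero_iff {v w : V} : v + w = 0 ↔ v = w := by
  constructor
  · intro h
    funext i
    have h1 : v i + w i = 0 := congrFun h i
    have h2 := eq_neg_of_add_eq_zero_left h1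
    rwa [CharTwo.neg_eq] at h2
  · rintro rfl; exact vadd_self v

lemma zmod2_add_one {x y : ZMod 2} (h : x ≠ y) : x + 1 = y := by
  rcases zmod2_cases x with rfl | rfl <;> rcases zmod2_cases y with rfl | rfl <;>
    first | rfl | exact absurd rfl h

lemma hit10 {v₁ v₂ : V} (h1 : v₁ ≠ 0) (h12 : v₁ ≠ v₂) :
    ∃ w : V, sympPair w v₁ = 1 ∧ sympPair w v₂ = 0 := by
  obtain ⟨p, hp⟩ := exists_pair_one h1
  rcases zmod2_cases (sympPair p v₂) with h0 | hone
  · exact ⟨p, hp, h0⟩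
  · have hne : v₁ + v₂ ≠ 0 := fun h => h12 (vadd_eq_zero_iff.mp h)
    obtain ⟨q, hq⟩ := exists_pair_one hne
    rw [sympPair_add_right] at hq
    rcases zmod2_cases (sympPair q v₂) with h0 | hone'
    · rw [h0, add_zero] at hq
      exact ⟨q, hq, h0⟩
    · rw [hone'] at hq
      have hq1 : sympPair q v₁ = 0 := by
        rcases zmod2_cases (sympPair q v₁) with h | h
        · exact h
        · rw [h] at hq; exact absurd hq (by decide)
      refine ⟨p + q, ?_, ?_⟩
      · rw [sympPair_add_left, hp, hq1, add_zero]
      · rw [sympPair_add_left, hone, hone']; decide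

lemma hit11 {v₁ v₂ : V} (h1 : v₁ ≠ 0) (h2 : v₂ ≠ 0) :
    ∃ u : V, sympPair u v₁ = 1 ∧ sympPair u v₂ = 1 := by
  obtain ⟨p, hp⟩ := exists_pair_one h1
  obtain ⟨r, hr⟩ := exists_pair_one h2
  rcases zmod2_cases (sympPair p v₂) with hp2 | hp2
  · rcases zmod2_cases (sympPair r v₁) with hr1 | hr1
    · refine ⟨p + r, ?_, ?_⟩
      · rw [sympPair_add_left, hp, hr1, add_zero]
      · rw [sympPair_add_left, hp2, hr, zero_add]
    · exact ⟨r, hr1, hr⟩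
  · exact ⟨p, hp, hp2⟩

lemma hit100 {v₁ v₂ v₃ : V} (h1 : v₁ ≠ 0) (h12 : v₁ ≠ v₂) (h13 : v₁ ≠ v₃)
    (h123 : v₁ ≠ v₂ + v₃) :
    ∃ w : V, sympPair w v₁ = 1 ∧ sympPair w v₂ = 0 ∧ sympPair w v₃ = 0 := by
  obtain ⟨p, hp1, hp2⟩ := hit10 h1 h12
  rcases zmod2_cases (sympPair p v₃) with hp3 | hp3
  · exact ⟨p, hp1, hp2, hp3⟩
  · have ha : v₁ + v₃ ≠ 0 := fun h => h13 (vadd_eq_zero_iff.mp h)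
    have hb : v₁ + v₃ ≠ v₂ := by
      intro h
      apply h123
      have : v₁ + v₃ + v₃ = v₂ + v₃ := by rw [h]
      rwa [add_assoc, vadd_self, add_zero] at this
    obtain ⟨q, hq1, hq2⟩ := hit10 ha hb
    rw [sympPair_add_right] at hq1
    rcases zmod2_cases (sympPair q v₃) with hq3 | hq3
    · rw [hq3, add_zero] at hq1
      exact ⟨q, hq1, hq2, hq3⟩
    · rw [hq3] at hq1
      have hq1' : sympPair q v₁ = 0 := by
        rcases zmod2_cases (sympPair q v₁) with h | h
        · exact h
        · rw [h] at hq1; exact absurd hq1 (by decide)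
      refine ⟨p + q, ?_, ?_, ?_⟩
      · rw [sympPair_add_left, hp1, hq1', add_zero]
      · rw [sympPair_add_left, hp2, hq2, add_zero]
      · rw [sympPair_add_left, hp3, hq3]; decide

lemma exists_nu {η μ₁ μ₂ : V} (a : ZMod 2) (hη : η ≠ 0) (h1 : μ₁ ≠ 0) (h2 : μ₂ ≠ 0)
    (h1η : μ₁ ≠ η) (h2η : μ₂ ≠ η) (h12 : μ₁ ≠ μ₂)
    (ha1 : sympPair μ₁ η = a) (ha2 : sympPair μ₂ η = a) (hp12 : sympPair μ₁ μ₂ = 0) :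
    ∃ ν : V, sympPair ν η = a ∧ sympPair ν μ₁ = 1 ∧ sympPair ν μ₂ = 1 := by
  obtain ⟨u, hu1, hu2⟩ := hit11 h1 h2
  by_cases ht : sympPair u η = a
  · exact ⟨u, ht, hu1, hu2⟩
  · have hηsum : η ≠ μ₁ + μ₂ := by
      intro h
      apply ht
      have hA : a = 0 := by
        rw [← ha1, h, sympPair_add_right, sympPair_self, zero_add, hp12]
      have hT : sympPair u η = 0 := by
        rw [h, sympPair_add_right, hu1, hu2]; decide
      rw [hT, hA]
    obtain ⟨w, hw1, hw2, hw3⟩ := hit100 hη (Ne.symm h1η) (Ne.symm h2η) hηsum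
    refine ⟨u + w, ?_, ?_, ?_⟩
    · rw [sympPair_add_left, hw1, zmod2_add_one ht]
    · rw [sympPair_add_left, hu1, hw2, add_zero]
    · rw [sympPair_add_left, hu2, hw3, add_zero]

end Hits

section Key
variable {g : ℕ}
local notation "V" => Fin g ⊕ Fin g → ZMod 2

lemma key (η : V) (hη : η ≠ 0) :
    ∀ μ₁ μ₂ : V, μ₁ ≠ 0 → μ₂ ≠ 0 → μ₁ ≠ η → μ₂ ≠ η →
      sympPair μ₁ η = sympPair μ₂ η →
      ∃ S : Matrix (Fin g ⊕ Fin g) (Fin g ⊕ Fin g) (ZMod 2),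
        Sᵀ * sympJ g * S = sympJ g ∧ S.mulVec η = η ∧ S.mulVec μ₁ = μ₂ := by
  intro μ₁ μ₂ h1 h2 h1η h2η hp
  by_cases h12 : μ₁ = μ₂
  · exact ⟨1, by rw [Matrix.transpose_one, Matrix.one_mul, Matrix.mul_one],
      Matrix.one_mulVec η, by rw [Matrix.one_mulVec, h12]⟩
  rcases zmod2_cases (sympPair μ₁ μ₂) with hpp | hpp
  · -- need intermediate ν
    obtain ⟨ν, hν0, hν1, hν2⟩ := exists_nu (sympPair μ₁ η) hη h1 h2 h1η h2η h12 rfl hp.symm hpp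
    have e1 : (tv (μ₁ + ν)).mulVec η = η := by
      rw [tv_mulVec, sympPair_add_right, sympPair_comm η μ₁, sympPair_comm η ν, hp, hν0,
        hp, CharTwo.add_self_eq_zero, zero_smul, add_zero]
    have e2 : (tv (ν + μ₂)).mulVec η = η := by
      rw [tv_mulVec, sympPair_add_right, sympPair_comm η ν, sympPair_comm η μ₂, hν0, hp,
        CharTwo.add_self_eq_zero, zero_smul, add_zero]
    have e3 : (tv (μ₁ + ν)).mulVec μ₁ = ν := by
      rw [tv_mulVec, sympPair_add_right, sympPair_self, zero_add, sympPair_comm μ₁ ν, hν1,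
        one_smul, ← add_assoc, vadd_self, zero_add]
    have e4 : (tv (ν + μ₂)).mulVec ν = μ₂ := by
      rw [tv_mulVec, sympPair_add_right, sympPair_self, zero_add, hν2, one_smul,
        ← add_assoc, vadd_self, zero_add]
    refine ⟨tv (ν + μ₂) * tv (μ₁ + ν), ?_, ?_, ?_⟩
    · have hassoc : (tv (ν + μ₂) * tv (μ₁ + ν))ᵀ * sympJ g * (tv (ν + μ₂) * tv (μ₁ + ν))
          = (tv (μ₁ + ν))ᵀ * ((tv (ν + μ₂))ᵀ * sympJ g * tv (ν + μ₂)) * tv (μ₁ + ν) := by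
        rw [Matrix.transpose_mul]; noncomm_ring
      rw [hassoc, tv_symplectic, tv_symplectic]
    · rw [← Matrix.mulVec_mulVec, e1, e2]
    · rw [← Matrix.mulVec_mulVec, e3, e4]
  · refine ⟨tv (μ₁ + μ₂), tv_symplectic _, ?_, ?_⟩
    · rw [tv_mulVec, sympPair_add_right, sympPair_comm η μ₁, sympPair_comm η μ₂, hp,
        CharTwo.add_self_eq_zero, zero_smul, add_zero]
    · rw [tv_mulVec, sympPair_add_right, sympPair_self, zero_add, hpp, one_smul,
        ← add_assoc, vadd_self, zero_add]

lemma pair_invariant {S : Matrix (Fin g ⊕ Fin g) (Fin g ⊕ Fin g) (ZMod 2)}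
    (hS : Sᵀ * sympJ g * S = sympJ g) (x y : V) :
    sympPair (S.mulVec x) (S.mulVec y) = sympPair x y := by
  rw [sympPair, Matrix.mulVec_mulVec, Matrix.dotProduct_mulVec, ← Matrix.mulVec_transpose,
    Matrix.mulVec_mulVec, Matrix.transpose_mul, sympJ_transpose, hS,
    dotProduct_comm, sympPair_comm x y]
  rfl

lemma symplectic_inj {S : Matrix (Fin g ⊕ Fin g) (Fin g ⊕ Fin g) (ZMod 2)}
    (hS : Sᵀ * sympJ g * S = sympJ g) {x y : V}
    (h : S.mulVec x = S.mulVec y) : x = y := by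
  have hL : (sympJ g * Sᵀ * sympJ g) * S = 1 := by
    have hstep : (sympJ g * Sᵀ * sympJ g) * S = sympJ g * (Sᵀ * sympJ g * S) := by
      noncomm_ring
    rw [hstep, hS, sympJ_mul_sympJ]
  calc x = ((sympJ g * Sᵀ * sympJ g) * S).mulVec x := by rw [hL, Matrix.one_mulVec]
    _ = (sympJ g * Sᵀ * sympJ g).mulVec (S.mulVec x) := (Matrix.mulVec_mulVec ..).symm
    _ = (sympJ g * Sᵀ * sympJ g).mulVec (S.mulVec y) := by rw [h]
    _ = ((sympJ g * Sᵀ * sympJ g) * S).mulVec y := Matrix.mulVec_mulVec ..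
    _ = y := by rw [hL, Matrix.one_mulVec]

end Key

/-- The stabilizer `G_η` of a nonzero vector `η` in `Sp(2g, ℤ/2ℤ)` acts on the
nonzero vectors of `(ℤ/2ℤ)^{2g}` with exactly three orbits: `{η}`,
`{μ ∉ {0, η} : ⟨μ, η⟩ = 0}` and `{μ : ⟨μ, η⟩ = 1}`. Concretely: any two nonzero
vectors `μ₁, μ₂ ∉ {0, η}` with `⟨μ₁, η⟩ = ⟨μ₂, η⟩` are related by some
`S ∈ Sp(2g, ℤ/2ℤ)` (i.e. `Sᵀ J S = J`) fixing `η`; and two nonzero vectors are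
related by such an `S` if and only if they lie in the same one of the three sets. -/
theorem stabilizer_three_orbits (g : ℕ) (hg : 1 ≤ g)
    (η : Fin g ⊕ Fin g → ZMod 2) (hη : η ≠ 0) :
    (∀ μ₁ μ₂ : Fin g ⊕ Fin g → ZMod 2, μ₁ ≠ 0 → μ₂ ≠ 0 → μ₁ ≠ η → μ₂ ≠ η →
      sympPair μ₁ η = sympPair μ₂ η →
      ∃ S : Matrix (Fin g ⊕ Fin g) (Fin g ⊕ Fin g) (ZMod 2),
        Sᵀ * sympJ g * S = sympJ g ∧ S.mulVec η = η ∧ S.mulVec μ₁ = μ₂) ∧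
    (∀ μ₁ μ₂ : Fin g ⊕ Fin g → ZMod 2, μ₁ ≠ 0 → μ₂ ≠ 0 →
      ((∃ S : Matrix (Fin g ⊕ Fin g) (Fin g ⊕ Fin g) (ZMod 2),
          Sᵀ * sympJ g * S = sympJ g ∧ S.mulVec η = η ∧ S.mulVec μ₁ = μ₂) ↔
        ((μ₁ = η ∧ μ₂ = η) ∨
         (μ₁ ≠ η ∧ μ₂ ≠ η ∧ sympPair μ₁ η = 0 ∧ sympPair μ₂ η = 0) ∨
         (sympPair μ₁ η = 1 ∧ sympPair μ₂ η = 1)))) := by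
  refine ⟨key η hη, ?_⟩
  intro μ₁ μ₂ h1 h2
  constructor
  · rintro ⟨S, hS, hSη, hSμ⟩
    by_cases h1η : μ₁ = η
    · exact Or.inl ⟨h1η, by rw [← hSμ, h1η, hSη]⟩
    · have h2η : μ₂ ≠ η := by
        intro h
        exact h1η (symplectic_inj hS (by rw [hSμ, hSη, h]))
      have hpair : sympPair μ₂ η = sympPair μ₁ η := by
        rw [← hSμ]
        conv_lhs => rw [← hSη]
        exact pair_invariant hS μ₁ η
      rcases zmod2_cases (sympPair μ₁ η) with h0 | hone
      · exact Or.inr (Or.inl ⟨h1η, h2η, h0, by rw [hpair, h0]⟩)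
      · exact Or.inr (Or.inr ⟨hone, by rw [hpair, hone]⟩)
  · rintro (⟨e1, e2⟩ | ⟨n1, n2, p1, p2⟩ | ⟨p1, p2⟩)
    · exact ⟨1, by rw [Matrix.transpose_one, Matrix.one_mul, Matrix.mul_one],
        Matrix.one_mulVec η, by rw [Matrix.one_mulVec, e1, e2]⟩
    · exact key η hη μ₁ μ₂ h1 h2 n1 n2 (p1.trans p2.symm)
    · have n1 : μ₁ ≠ η := by
        intro h; rw [h, sympPair_self] at p1; exact absurd p1 (by decide)
      have n2 : μ₂ ≠ η := by
        intro h; rw [h, sympPair_self] at p2; exact absurd p2 (by decide)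
      exact key η hη μ₁ μ₂ h1 h2 n1 n2 (p1.trans p2.symm)
end

section
/- Let k ≥ 1, let τ' be a symmetric k×k complex matrix with positive definite imaginary part, let b ∈ ℂ^k, and for t ∈ ℝ let τ(t) be the symmetric (k+1)×(k+1) complex matrix with (1,1)-entry it, first row/column off-diagonal entries given by b, and lower-right k×k block τ'. Let ε = (1, ε̃) and δ = (y, δ̃) with ε̃, δ̃ ∈ {0,1}^k and y ∈ {0,1}. Then there exist constants T, C > 0 such that for all t ≥ T, |θ[ε;δ](τ(t))| ≤ C·e^{−πt/4}, where θ[ε;δ](τ(t)) = Σ_{n ∈ ℤ^{k+1}} exp(πi((n + ε/2)ᵀ τ(t) (n + ε/2) + (n + ε/2)·δ)). -/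
open scoped Real

/-- The degenerating period matrix `τ(t) = [[it, bᵀ], [b, τ']]`, indexed by
`Fin 1 ⊕ Fin k`. -/
def degMatrix (k : ℕ) (τ' : Matrix (Fin k) (Fin k) ℂ) (b : Fin k → ℂ) (t : ℝ) :
    Matrix (Fin 1 ⊕ Fin k) (Fin 1 ⊕ Fin k) ℂ :=
  Matrix.fromBlocks (Matrix.of fun _ _ => (t : ℂ) * Complex.I)
    (Matrix.of fun _ j => b j) (Matrix.of fun i _ => b i) τ'

/- ### Auxiliary lemmas -/

-- 1-dimensional Gaussian summability with shift
lemma summable_gauss_int (d a : ℝ) (hd : 0 < d) :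
    Summable fun z : ℤ => Real.exp (-(d * ((z : ℝ) + a) ^ 2)) := by
  have h := HurwitzKernelBounds.summable_f_int 0 a (div_pos hd Real.pi_pos)
  refine h.congr fun z => ?_
  rw [HurwitzKernelBounds.f_int, pow_zero, one_mul]
  congr 1
  field_simp

lemma summable_gauss_fin : ∀ (m : ℕ) (c a : Fin m → ℝ), (∀ i, 0 < c i) →
    Summable fun n : Fin m → ℤ => Real.exp (-∑ i, c i * ((n i : ℝ) + a i) ^ 2) := by
  intro m
  induction m with
  | zero =>
    intro c a hc
    haveI : Subsingleton (Fin 0 → ℤ) := ⟨fun f g => funext fun i => i.elim0⟩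
    haveI : Finite (Fin 0 → ℤ) := Finite.of_subsingleton
    exact Summable.of_finite
  | succ m ih =>
    intro c a hc
    have h1 := summable_gauss_int (c 0) (a 0) (hc 0)
    have h2 := ih (c ∘ Fin.succ) (a ∘ Fin.succ) (fun i => hc _)
    have h3 := h1.mul_of_nonneg h2 (fun z => Real.exp_nonneg _) (fun n => Real.exp_nonneg _)
    have := (Fin.consEquiv (fun _ => ℤ)).symm.summable_iff.mpr h3
    refine this.congr fun n => ?_
    simp only [Function.comp_apply, Fin.consEquiv_symm_apply, Fin.sum_univ_succ, neg_add,
      Real.exp_add, Function.comp_apply]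
    rfl

lemma summable_gauss_pi {ι : Type*} [Fintype ι] (c a : ι → ℝ) (hc : ∀ i, 0 < c i) :
    Summable fun n : ι → ℤ => Real.exp (-∑ i, c i * ((n i : ℝ) + a i) ^ 2) := by
  obtain ⟨e⟩ : Nonempty (ι ≃ Fin (Fintype.card ι)) := ⟨Fintype.equivFin ι⟩
  have h := summable_gauss_fin (Fintype.card ι) (c ∘ e.symm) (a ∘ e.symm)
    (fun i => hc _)
  have h2 := (Equiv.arrowCongr e (Equiv.refl ℤ)).summable_iff.mpr h
  refine h2.congr fun n => ?_
  simp only [Function.comp_apply]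
  congr 1
  rw [neg_inj]
  rw [← Equiv.sum_comp e.symm (fun i => c i * ((n i : ℝ) + a i) ^ 2)]
  refine Finset.sum_congr rfl fun j _ => ?_
  simp [Equiv.arrowCongr]

lemma quad_smul {k : ℕ} (M : Matrix (Fin k) (Fin k) ℝ) (s : ℝ) (x : Fin k → ℝ) :
    (∑ i, ∑ j, (s * x i) * (s * x j) * M i j) = s ^ 2 * ∑ i, ∑ j, x i * x j * M i j := by
  rw [Finset.mul_sum]
  refine Finset.sum_congr rfl fun i _ => ?_
  rw [Finset.mul_sum]
  refine Finset.sum_congr rfl fun j _ => by ring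

lemma posdef_lower_bound {k : ℕ} (hk : 1 ≤ k) {M : Matrix (Fin k) (Fin k) ℝ}
    (hM : M.PosDef) :
    ∃ c : ℝ, 0 < c ∧ ∀ x : Fin k → ℝ,
      c * (∑ i, (x i) ^ 2) ≤ ∑ i, ∑ j, x i * x j * M i j := by
  classical
  set Q : EuclideanSpace ℝ (Fin k) → ℝ := fun x => ∑ i, ∑ j, x i * x j * M i j with hQdef
  have hQc : Continuous Q := by
    apply continuous_finset_sum
    intro i _
    apply continuous_finset_sum
    intro j _
    exact (((continuous_apply i).comp (PiLp.continuous_ofLp (p := 2) (β := fun _ : Fin k => ℝ))).mul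
      ((continuous_apply j).comp (PiLp.continuous_ofLp (p := 2) (β := fun _ : Fin k => ℝ)))).mul
      continuous_const
  have hQpos : ∀ x : EuclideanSpace ℝ (Fin k), x ≠ 0 → 0 < Q x := by
    intro x hx
    have h := hM.dotProduct_mulVec_pos (x := fun i => x i)
      (fun hcon => hx (by ext i; exact congrFun hcon i))
    have heq : dotProduct (star (fun i => x i)) (M.mulVec (fun i => x i)) = Q x := by
      simp only [dotProduct, Matrix.mulVec, Pi.star_apply, star_trivial, hQdef,
        Finset.mul_sum]
      refine Finset.sum_congr rfl fun i _ => ?_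
      refine Finset.sum_congr rfl fun j _ => by ring
    rwa [heq] at h
  have hsne : (Metric.sphere (0 : EuclideanSpace ℝ (Fin k)) 1).Nonempty := by
    refine ⟨EuclideanSpace.single ⟨0, hk⟩ (1 : ℝ), ?_⟩
    rw [mem_sphere_zero_iff_norm, EuclideanSpace.norm_single, norm_one]
  obtain ⟨x₀, hx₀mem, hx₀min⟩ :=
    (isCompact_sphere (0 : EuclideanSpace ℝ (Fin k)) 1).exists_isMinOn hsne
      hQc.continuousOn
  have hx₀norm : ‖x₀‖ = 1 := mem_sphere_zero_iff_norm.mp hx₀mem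
  have hx₀ne : x₀ ≠ 0 := by
    intro h; rw [h, norm_zero] at hx₀norm; norm_num at hx₀norm
  refine ⟨Q x₀, hQpos x₀ hx₀ne, ?_⟩
  intro x
  by_cases hx : x = 0
  · subst hx; simp [hQdef]
  · set xE : EuclideanSpace ℝ (Fin k) := (WithLp.equiv 2 (Fin k → ℝ)).symm x with hxEdef
    have hxE : xE ≠ 0 := by
      intro hcon; exact hx (by simpa [hxEdef] using congrArg WithLp.ofLp hcon)
    set r : ℝ := ‖xE‖ with hr
    have hrpos : 0 < r := norm_pos_iff.mpr hxE
    set u : EuclideanSpace ℝ (Fin k) := r⁻¹ • xE with hu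
    have humem : u ∈ Metric.sphere (0 : EuclideanSpace ℝ (Fin k)) 1 := by
      rw [mem_sphere_zero_iff_norm, hu, norm_smul, norm_inv, Real.norm_eq_abs,
        abs_of_pos hrpos, ← hr, inv_mul_cancel₀ hrpos.ne']
    have hmin := hx₀min humem
    have hQx : Q xE = ∑ i, ∑ j, x i * x j * M i j := rfl
    have hsq : Q xE = r ^ 2 * Q u := by
      have h2 : Q u = (r⁻¹) ^ 2 * Q xE := by
        rw [hQdef]
        simpa [hu, hxEdef] using quad_smul M r⁻¹ x
      rw [h2]
      field_simp
    have hnorm2 : ∑ i, (x i) ^ 2 = r ^ 2 := by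
      rw [hr, EuclideanSpace.norm_eq, Real.sq_sqrt (by positivity)]
      exact Finset.sum_congr rfl fun i _ => by rw [Real.norm_eq_abs, sq_abs]; rfl
    rw [← hQx, hnorm2, hsq]
    calc Q x₀ * r ^ 2 ≤ Q u * r ^ 2 := by
          apply mul_le_mul_of_nonneg_right hmin (by positivity)
      _ = r ^ 2 * Q u := by ring

lemma aux_im (a c : ℝ) (z : ℂ) : ((a : ℂ) * z * (c : ℂ)).im = a * c * z.im := by
  simp [Complex.mul_im, Complex.mul_re]
  ring

lemma term_abs (k : ℕ) (τ' : Matrix (Fin k) (Fin k) ℂ) (b : Fin k → ℂ) (t : ℝ)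
    (e d : Fin 1 ⊕ Fin k → ℤ) (n : Fin 1 ⊕ Fin k → ℤ) :
    ‖(Complex.exp ((π : ℂ) * Complex.I *
      ((∑ i, ∑ j, ((n i : ℂ) + (e i : ℂ) / 2) * degMatrix k τ' b t i j *
          ((n j : ℂ) + (e j : ℂ) / 2)) +
        ∑ i, ((n i : ℂ) + (e i : ℂ) / 2) * (d i : ℂ))))‖ =
    Real.exp (-π * ∑ i, ∑ j, ((n i : ℝ) + (e i : ℝ) / 2) *
      (((n j : ℝ) + (e j : ℝ) / 2) * (degMatrix k τ' b t i j).im)) := by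
  rw [Complex.norm_exp]
  congr 1
  have hv : ∀ i, ((n i : ℂ) + (e i : ℂ) / 2) = ((((n i : ℝ) + (e i : ℝ) / 2) : ℝ) : ℂ) := by
    intro i; push_cast; ring
  simp only [hv]
  have hre : ∀ z : ℂ, ((π : ℂ) * Complex.I * z).re = -π * z.im := by
    intro z
    simp [Complex.mul_re, Complex.mul_im]
  rw [hre]
  congr 1
  rw [Complex.add_im]
  have hlin : (∑ i, ((((n i : ℝ) + (e i : ℝ) / 2) : ℝ) : ℂ) * (d i : ℂ)).im = 0 := by
    rw [Complex.im_sum]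
    refine Finset.sum_eq_zero fun i _ => ?_
    simp [Complex.mul_im]
  rw [hlin, add_zero, Complex.im_sum]
  refine Finset.sum_congr rfl fun i _ => ?_
  rw [Complex.im_sum]
  refine Finset.sum_congr rfl fun j _ => ?_
  rw [aux_im]
  ring

lemma quad_blocks (k : ℕ) (τ' : Matrix (Fin k) (Fin k) ℂ) (b : Fin k → ℂ) (t : ℝ)
    (W : Fin 1 ⊕ Fin k → ℝ) :
    ∑ i, ∑ j, W i * (W j * (degMatrix k τ' b t i j).im)
      = t * W (Sum.inl 0) ^ 2
        + ((∑ j, W (Sum.inl 0) * (W (Sum.inr j) * (b j).im))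
            + ∑ j, W (Sum.inr j) * (W (Sum.inl 0) * (b j).im))
        + ∑ i, ∑ j, W (Sum.inr i) * (W (Sum.inr j) * (τ' i j).im) := by
  simp only [Fintype.sum_sum_type, Fin.sum_univ_one, degMatrix,
    Matrix.fromBlocks_apply₁₁, Matrix.fromBlocks_apply₁₂, Matrix.fromBlocks_apply₂₁,
    Matrix.fromBlocks_apply₂₂, Matrix.of_apply, Complex.mul_im, Complex.I_im,
    Complex.I_re, Complex.ofReal_re, Complex.ofReal_im]
  rw [Finset.sum_add_distrib]
  ring

set_option maxHeartbeats 1000000 in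
/-- A theta constant whose characteristic has first entry `ε₁ = 1`
(i.e. `ε = (1, ε̃)`, `δ = (y, δ̃)`), evaluated at the degenerating period matrix
`τ(t) = [[it, bᵀ], [b, τ']]`, is eventually bounded by `C·e^{-πt/4}`, i.e. has
vanishing order at least `1/8` in `q = e^{2πiτ₁₁}` at the boundary. -/
theorem theta_constant_decay_at_boundary (k : ℕ) (hk : 1 ≤ k)
    (τ' : Matrix (Fin k) (Fin k) ℂ) (hsym : τ'.IsSymm)
    (hpos : (τ'.map Complex.im).PosDef) (b : Fin k → ℂ)
    (εt δt : Fin k → ℤ) (hεt : ∀ i, εt i = 0 ∨ εt i = 1)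
    (hδt : ∀ i, δt i = 0 ∨ δt i = 1) (y : ℤ) (hy : y = 0 ∨ y = 1) :
    ∃ T C : ℝ, 0 < T ∧ 0 < C ∧ ∀ t : ℝ, T ≤ t →
      ‖(∑' n : Fin 1 ⊕ Fin k → ℤ,
        Complex.exp ((π : ℂ) * Complex.I *
          ((∑ i, ∑ j, ((n i : ℂ) + ((Sum.elim (fun _ => (1 : ℤ)) εt) i : ℂ) / 2) *
              degMatrix k τ' b t i j *
              ((n j : ℂ) + ((Sum.elim (fun _ => (1 : ℤ)) εt) j : ℂ) / 2)) +
            ∑ i, ((n i : ℂ) + ((Sum.elim (fun _ => (1 : ℤ)) εt) i : ℂ) / 2) *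
              ((Sum.elim (fun _ => y) δt) i : ℂ))))‖ ≤
        C * Real.exp (-π * t / 4) := by
  classical
  obtain ⟨c, hc, hcle⟩ := posdef_lower_bound hk hpos
  set e : Fin 1 ⊕ Fin k → ℤ := Sum.elim (fun _ => (1 : ℤ)) εt with he
  set d : Fin 1 ⊕ Fin k → ℤ := Sum.elim (fun _ => y) δt with hd
  -- the imaginary parts of b and the constant A
  set β : Fin k → ℝ := fun j => (b j).im with hβ
  set B2 : ℝ := ∑ j, (β j) ^ 2 with hB2
  have hB2nn : 0 ≤ B2 := Finset.sum_nonneg fun j _ => sq_nonneg _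
  set A : ℝ := 2 / c * B2 with hA
  have hAnn : 0 ≤ A := by positivity
  -- the dominating function h
  set cv : Fin 1 ⊕ Fin k → ℝ := Sum.elim (fun _ => π) (fun _ => π * c / 2) with hcv
  have hcvpos : ∀ i, 0 < cv i := by
    intro i
    rcases i with i | i
    · simpa [hcv] using Real.pi_pos
    · simp only [hcv, Sum.elim_inr]
      positivity
  set av : Fin 1 ⊕ Fin k → ℝ := fun i => (e i : ℝ) / 2 with hav
  set h : (Fin 1 ⊕ Fin k → ℤ) → ℝ :=
    fun n => Real.exp (-∑ i, cv i * ((n i : ℝ) + av i) ^ 2) with hh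
  have hsum : Summable h := summable_gauss_pi cv av hcvpos
  have htsumpos : 0 < ∑' n, h n :=
    lt_of_lt_of_le (Real.exp_pos _)
      (Summable.le_tsum hsum (fun _ => 0) fun _ _ => Real.exp_nonneg _)
  refine ⟨A + 1, Real.exp (π * (A + 1) / 4) * ∑' n, h n, by linarith, by positivity, ?_⟩
  intro t ht
  set K : ℝ := Real.exp (π * (A + 1) / 4) * Real.exp (-π * t / 4) with hK
  -- pointwise bound
  have hpt : ∀ n : Fin 1 ⊕ Fin k → ℤ,
      ‖(Complex.exp ((π : ℂ) * Complex.I *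
        ((∑ i, ∑ j, ((n i : ℂ) + (e i : ℂ) / 2) * degMatrix k τ' b t i j *
            ((n j : ℂ) + (e j : ℂ) / 2)) +
          ∑ i, ((n i : ℂ) + (e i : ℂ) / 2) * (d i : ℂ))))‖ ≤ K * h n := by
    intro n
    rw [term_abs k τ' b t e d n]
    set W : Fin 1 ⊕ Fin k → ℝ := fun i => (n i : ℝ) + (e i : ℝ) / 2 with hW
    have hqb := quad_blocks k τ' b t W
    rw [show (∑ i, ∑ j, ((n i : ℝ) + (e i : ℝ) / 2) *
        (((n j : ℝ) + (e j : ℝ) / 2) * (degMatrix k τ' b t i j).im))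
        = ∑ i, ∑ j, W i * (W j * (degMatrix k τ' b t i j).im) from rfl, hqb]
    set w0 : ℝ := W (Sum.inl 0) with hw0def
    set wt : Fin k → ℝ := fun j => W (Sum.inr j) with hwt
    set S : ℝ := ∑ j, (wt j) ^ 2 with hS
    -- lower bound on the quadratic block
    have hQ : c * S ≤ ∑ i, ∑ j, W (Sum.inr i) * (W (Sum.inr j) * (τ' i j).im) := by
      have h1 := hcle wt
      have h2 : (∑ i, ∑ j, wt i * wt j * (τ'.map Complex.im) i j)
          = ∑ i, ∑ j, W (Sum.inr i) * (W (Sum.inr j) * (τ' i j).im) := by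
        refine Finset.sum_congr rfl fun i _ => Finset.sum_congr rfl fun j _ => ?_
        rw [Matrix.map_apply]
        ring
      rw [← h2]
      exact h1
    -- bound on the cross terms
    have hcross : -(2 / c * B2 * w0 ^ 2 + c / 2 * S)
        ≤ (∑ j, W (Sum.inl 0) * (W (Sum.inr j) * (b j).im))
          + ∑ j, W (Sum.inr j) * (W (Sum.inl 0) * (b j).im) := by
      have hj : ∀ j ∈ Finset.univ, -(2 / c * (β j) ^ 2 * w0 ^ 2 + c / 2 * (wt j) ^ 2)
          ≤ w0 * (wt j * β j) + wt j * (w0 * β j) := by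
        intro j _
        have hsq := sq_nonneg (2 * (w0 * β j) + c * wt j)
        have hdiv : 0 ≤ (2 * (w0 * β j) + c * wt j) ^ 2 / (2 * c) :=
          div_nonneg hsq (by linarith)
        have heq : (2 * (w0 * β j) + c * wt j) ^ 2 / (2 * c)
            = 2 / c * (β j) ^ 2 * w0 ^ 2 + c / 2 * (wt j) ^ 2
              + (w0 * (wt j * β j) + wt j * (w0 * β j)) := by
          field_simp
          ring
        rw [heq] at hdiv
        linarith
      have hs := Finset.sum_le_sum hj
      have hL : ∑ j, -(2 / c * (β j) ^ 2 * w0 ^ 2 + c / 2 * (wt j) ^ 2)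
          = -(2 / c * B2 * w0 ^ 2 + c / 2 * S) := by
        rw [hB2, hS]
        simp only [neg_add, Finset.sum_add_distrib, Finset.sum_neg_distrib]
        rw [← Finset.sum_mul, ← Finset.mul_sum, ← Finset.mul_sum]
      have hR : ∑ j, (w0 * (wt j * β j) + wt j * (w0 * β j))
          = (∑ j, W (Sum.inl 0) * (W (Sum.inr j) * (b j).im))
            + ∑ j, W (Sum.inr j) * (W (Sum.inl 0) * (b j).im) := by
        rw [Finset.sum_add_distrib]
      rw [hL, hR] at hs
      exact hs
    -- w0 = n₀ + 1/2 and its square is at least 1/4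
    have hw0 : w0 = (n (Sum.inl 0) : ℝ) + 1 / 2 := by
      simp [hw0def, hW, he]
    have hw0sq : 1 / 4 ≤ w0 ^ 2 := by
      rw [hw0]
      rcases le_or_gt 0 (n (Sum.inl 0)) with hm | hm
      · have : (0 : ℝ) ≤ (n (Sum.inl 0) : ℝ) := by exact_mod_cast hm
        nlinarith
      · have h1 : n (Sum.inl 0) ≤ -1 := by omega
        have : (n (Sum.inl 0) : ℝ) ≤ -1 := by exact_mod_cast h1
        nlinarith
    -- the sum of the dominating exponents
    have hsumcv : ∑ i, cv i * ((n i : ℝ) + av i) ^ 2 = π * w0 ^ 2 + π * c / 2 * S := by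
      have hWav : ∀ i, (n i : ℝ) + av i = W i := fun i => rfl
      simp only [hWav, hcv, Fintype.sum_sum_type, Fin.sum_univ_one, Sum.elim_inl,
        Sum.elim_inr, ← hw0def]
      rw [hS, hwt, ← Finset.mul_sum]
    -- final arithmetic
    rw [hK, hh, ← Real.exp_add, ← Real.exp_add, Real.exp_le_exp, hsumcv]
    set S1 : ℝ := ∑ j, W (Sum.inl 0) * (W (Sum.inr j) * (b j).im) with hS1
    set S2 : ℝ := ∑ j, W (Sum.inr j) * (W (Sum.inl 0) * (b j).im) with hS2
    set QQ : ℝ := ∑ i, ∑ j, W (Sum.inr i) * (W (Sum.inr j) * (τ' i j).im) with hQQ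
    clear_value S1 S2 QQ
    clear hS1 hS2 hQQ hsumcv hw0 hqb
    clear_value S w0
    clear hS hw0def
    have hABw : A * w0 ^ 2 = 2 / c * B2 * w0 ^ 2 := by rw [hA]
    clear_value A B2
    clear hA hB2
    have hprod : 0 ≤ (t - A - 1) * (w0 ^ 2 - 1 / 4) :=
      mul_nonneg (by linarith) (by linarith)
    have key : (t - A - 1) / 4 + w0 ^ 2 + c / 2 * S
        ≤ t * w0 ^ 2 + (S1 + S2) + QQ := by
      nlinarith [hQ, hcross, hprod, hABw]
    have hmul := mul_le_mul_of_nonneg_left key Real.pi_pos.le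
    nlinarith [hmul]
  -- summability of the norms
  have hfs : Summable (fun n : Fin 1 ⊕ Fin k → ℤ =>
      ‖Complex.exp ((π : ℂ) * Complex.I *
        ((∑ i, ∑ j, ((n i : ℂ) + (e i : ℂ) / 2) * degMatrix k τ' b t i j *
            ((n j : ℂ) + (e j : ℂ) / 2)) +
          ∑ i, ((n i : ℂ) + (e i : ℂ) / 2) * (d i : ℂ)))‖) := by
    refine Summable.of_nonneg_of_le (fun n => norm_nonneg _) (fun n => ?_)
      (hsum.mul_left K)
    exact hpt n
  calc ‖(∑' n : Fin 1 ⊕ Fin k → ℤ,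
        Complex.exp ((π : ℂ) * Complex.I *
          ((∑ i, ∑ j, ((n i : ℂ) + (e i : ℂ) / 2) * degMatrix k τ' b t i j *
              ((n j : ℂ) + (e j : ℂ) / 2)) +
            ∑ i, ((n i : ℂ) + (e i : ℂ) / 2) * (d i : ℂ))))‖
      = ‖∑' n : Fin 1 ⊕ Fin k → ℤ,
          Complex.exp ((π : ℂ) * Complex.I *
            ((∑ i, ∑ j, ((n i : ℂ) + (e i : ℂ) / 2) * degMatrix k τ' b t i j *
                ((n j : ℂ) + (e j : ℂ) / 2)) +
              ∑ i, ((n i : ℂ) + (e i : ℂ) / 2) * (d i : ℂ)))‖ :=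
        rfl
    _ ≤ ∑' n : Fin 1 ⊕ Fin k → ℤ,
          ‖Complex.exp ((π : ℂ) * Complex.I *
            ((∑ i, ∑ j, ((n i : ℂ) + (e i : ℂ) / 2) * degMatrix k τ' b t i j *
                ((n j : ℂ) + (e j : ℂ) / 2)) +
              ∑ i, ((n i : ℂ) + (e i : ℂ) / 2) * (d i : ℂ)))‖ :=
        norm_tsum_le_tsum_norm hfs
    _ ≤ ∑' n, K * h n := by
        refine Summable.tsum_le_tsum (fun n => ?_) hfs (hsum.mul_left K)
        exact hpt n
    _ = K * ∑' n, h n := tsum_mul_left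
    _ = (Real.exp (π * (A + 1) / 4) * ∑' n, h n) * Real.exp (-π * t / 4) := by
        rw [hK]; ring
end
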